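/- arXiv:1702.04300 — 2 statements merged into one kernel-verified Lean document; each statement's English description precedes it below -/
import Mathlib

section
/- Let x ∈ ℝⁿ with x > 0 componentwise and d ∈ ℝⁿ with ‖X⁻¹d‖ ≤ β < 1 where X = diag(x). Then -∑ᵢ ln(xᵢ + dᵢ) + ∑ᵢ ln(xᵢ) ≤ -eᵀX⁻¹d + β²/(2(1-β)), where e is the vector of ones. -/
private lemma key_scalar (β t : ℝ) (hβ0 : 0 ≤ β) (hβ : β < 1) (ht : |t| ≤ β) :
    -Real.log (1 + t) ≤ -t + t ^ 2 / (2 * (1 - β)) := by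
  have h1β : (0:ℝ) < 1 - β := by linarith
  set g : ℝ → ℝ := fun t => Real.log (1 + t) - t + t ^ 2 / (2 * (1 - β)) with hg
  have habs := abs_le.mp ht
  have hderiv : ∀ y : ℝ, -1 < y → HasDerivAt g ((1 + y)⁻¹ - 1 + y / (1 - β)) y := by
    intro y hy
    have hne : (1:ℝ) + y ≠ 0 := by linarith
    have h1 : HasDerivAt (fun s : ℝ => 1 + s) 1 y := (hasDerivAt_id y).const_add 1
    have h2 : HasDerivAt (fun s : ℝ => Real.log (1 + s)) ((1 + y)⁻¹) y := by
      simpa [Function.comp_def] using (Real.hasDerivAt_log hne).comp y h1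
    have h3 : HasDerivAt (fun s : ℝ => s ^ 2 / (2 * (1 - β))) (y / (1 - β)) y := by
      have := (hasDerivAt_pow 2 y).div_const (2 * (1 - β))
      refine this.congr_deriv ?_
      field_simp
      ring
    exact (h2.sub (hasDerivAt_id y)).add h3
  have hg0 : g 0 = 0 := by simp [hg]
  have key : 0 ≤ g t := by
    rcases le_or_gt 0 t with hpos | hneg
    · have mono : MonotoneOn g (Set.Icc 0 β) := by
        apply monotoneOn_of_deriv_nonneg (convex_Icc 0 β)
        · intro y hy
          exact (hderiv y (by simp at hy; linarith [hy.1])).continuousAt.continuousWithinAt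
        · intro y hy
          rw [interior_Icc] at hy
          exact (hderiv y (by linarith [hy.1])).differentiableAt.differentiableWithinAt
        · intro y hy
          rw [interior_Icc] at hy
          obtain ⟨hy1, hy2⟩ := hy
          rw [(hderiv y (by linarith)).deriv]
          have h1y : (0:ℝ) < 1 + y := by linarith
          have heq : (1 + y)⁻¹ - 1 + y / (1 - β) = y * (y + β) / ((1 - β) * (1 + y)) := by
            field_simp
            ring
          rw [heq]
          apply div_nonneg
          · nlinarith
          · positivity
      have := mono (Set.mem_Icc.mpr ⟨le_refl 0, hβ0⟩) (Set.mem_Icc.mpr ⟨hpos, habs.2⟩) hpos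
      linarith [hg0 ▸ this]
    · have anti : AntitoneOn g (Set.Icc (-β) 0) := by
        apply antitoneOn_of_deriv_nonpos (convex_Icc (-β) 0)
        · intro y hy
          simp only [Set.mem_Icc] at hy
          exact (hderiv y (by linarith [hy.1])).continuousAt.continuousWithinAt
        · intro y hy
          rw [interior_Icc] at hy
          exact (hderiv y (by linarith [hy.1])).differentiableAt.differentiableWithinAt
        · intro y hy
          rw [interior_Icc] at hy
          obtain ⟨hy1, hy2⟩ := hy
          rw [(hderiv y (by linarith)).deriv]
          have h1y : (0:ℝ) < 1 + y := by linarith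
          have heq : (1 + y)⁻¹ - 1 + y / (1 - β) = y * (y + β) / ((1 - β) * (1 + y)) := by
            field_simp
            ring
          rw [heq]
          apply div_nonpos_of_nonpos_of_nonneg
          · nlinarith
          · positivity
      have := anti (Set.mem_Icc.mpr ⟨habs.1, hneg.le⟩)
        (Set.mem_Icc.mpr ⟨neg_nonpos_of_nonneg hβ0, le_refl 0⟩) hneg.le
      linarith [hg0 ▸ this]
  simp only [hg] at key
  linarith

theorem stmt_0 {n : ℕ} (x d : Fin n → ℝ) (β : ℝ) (hx : ∀ i, 0 < x i)
    (hβ : β < 1) (hd : Real.sqrt (∑ i, (d i / x i) ^ 2) ≤ β) :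
    -∑ i, Real.log (x i + d i) + ∑ i, Real.log (x i) ≤
      -(∑ i, d i / x i) + β ^ 2 / (2 * (1 - β)) := by
  have hβ0 : 0 ≤ β := le_trans (Real.sqrt_nonneg _) hd
  have h1β : (0:ℝ) < 1 - β := by linarith
  have hsnn : 0 ≤ ∑ i, (d i / x i) ^ 2 :=
    Finset.sum_nonneg fun i _ => sq_nonneg _
  have hsum : ∑ i, (d i / x i) ^ 2 ≤ β ^ 2 := by
    calc ∑ i, (d i / x i) ^ 2 = (Real.sqrt (∑ i, (d i / x i) ^ 2)) ^ 2 :=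
          (Real.sq_sqrt hsnn).symm
      _ ≤ β ^ 2 := by nlinarith [Real.sqrt_nonneg (∑ i, (d i / x i) ^ 2)]
  have hti : ∀ i, |d i / x i| ≤ β := by
    intro i
    have hle : (d i / x i) ^ 2 ≤ β ^ 2 :=
      le_trans (Finset.single_le_sum (f := fun j => (d j / x j) ^ 2)
        (fun j _ => sq_nonneg _) (Finset.mem_univ i)) hsum
    rw [abs_le]
    constructor <;> nlinarith
  have hlog : ∀ i, Real.log (x i + d i) = Real.log (x i) + Real.log (1 + d i / x i) := by
    intro i
    have h1 : 0 < 1 + d i / x i := by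
      have := (abs_le.mp (hti i)).1
      linarith
    have hx0 : x i ≠ 0 := (hx i).ne'
    have heq : x i + d i = x i * (1 + d i / x i) := by
      field_simp
    rw [heq, Real.log_mul (hx i).ne' h1.ne']
  have hstep : -∑ i, Real.log (x i + d i) + ∑ i, Real.log (x i)
      = ∑ i, -Real.log (1 + d i / x i) := by
    rw [show (∑ i, Real.log (x i + d i))
        = ∑ i, (Real.log (x i) + Real.log (1 + d i / x i)) from
        Finset.sum_congr rfl fun i _ => hlog i, Finset.sum_add_distrib]
    rw [Finset.sum_neg_distrib]
    ring
  rw [hstep]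
  calc ∑ i, -Real.log (1 + d i / x i)
      ≤ ∑ i, (-(d i / x i) + (d i / x i) ^ 2 / (2 * (1 - β))) :=
        Finset.sum_le_sum fun i _ => key_scalar β (d i / x i) hβ0 hβ (hti i)
    _ = -(∑ i, d i / x i) + (∑ i, (d i / x i) ^ 2) / (2 * (1 - β)) := by
        rw [Finset.sum_add_distrib, Finset.sum_neg_distrib, Finset.sum_div]
    _ ≤ -(∑ i, d i / x i) + β ^ 2 / (2 * (1 - β)) := by
        gcongr
end

section
/- Let H be a symmetric n×n matrix, B ∈ ℝ^{m×n}, β > 0, and consider the trust-region problem: minimize gᵀd + ½dᵀHd subject to Bd = 0, ‖d‖ ≤ β. Suppose d* is feasible and there exist y ∈ ℝᵐ and λ ≥ 0 with (H + λI)d* - Bᵀy = -g, λ(β - ‖d*‖) = 0, and dᵀ(H + λI)d ≥ 0 for all d with Bd = 0. Then gᵀd* + ½(d*)ᵀHd* ≤ -½λ‖d*‖² and d* is a global minimizer of the trust-region problem. -/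
open scoped Matrix

theorem stmt_11 {n m : ℕ} (H : Matrix (Fin n) (Fin n) ℝ) (hH : H.IsSymm)
    (B : Matrix (Fin m) (Fin n) ℝ) (g : Fin n → ℝ) (β : ℝ) (hβ : 0 < β)
    (dstar : Fin n → ℝ) (y : Fin m → ℝ) (lam : ℝ) (hlam : 0 ≤ lam)
    (hfeas1 : B.mulVec dstar = 0) (hfeas2 : Real.sqrt (∑ i, (dstar i) ^ 2) ≤ β)
    (hkkt : (H + lam • (1 : Matrix (Fin n) (Fin n) ℝ)).mulVec dstar - Bᵀ.mulVec y = -g)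
    (hcomp : lam * (β - Real.sqrt (∑ i, (dstar i) ^ 2)) = 0)
    (hpsd : ∀ d : Fin n → ℝ, B.mulVec d = 0 →
      0 ≤ d ⬝ᵥ (H + lam • (1 : Matrix (Fin n) (Fin n) ℝ)).mulVec d) :
    g ⬝ᵥ dstar + (1 / 2) * (dstar ⬝ᵥ H.mulVec dstar)
        ≤ -(1 / 2) * lam * (∑ i, (dstar i) ^ 2) ∧
    ∀ d : Fin n → ℝ, B.mulVec d = 0 → Real.sqrt (∑ i, (d i) ^ 2) ≤ β →
      g ⬝ᵥ dstar + (1 / 2) * (dstar ⬝ᵥ H.mulVec dstar)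
        ≤ g ⬝ᵥ d + (1 / 2) * (d ⬝ᵥ H.mulVec d) := by
  set M := H + lam • (1 : Matrix (Fin n) (Fin n) ℝ) with hM
  have hMsymm : Mᵀ = M := by
    simp [hM, Matrix.transpose_add, Matrix.transpose_smul, hH.eq]
  have hsym : ∀ v w : Fin n → ℝ, v ⬝ᵥ M.mulVec w = w ⬝ᵥ M.mulVec v := by
    intro v w
    rw [Matrix.dotProduct_mulVec, ← Matrix.mulVec_transpose, hMsymm,
      dotProduct_comm]
  have hsum : ∀ v : Fin n → ℝ, (∑ i, (v i) ^ 2) = v ⬝ᵥ v := by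
    intro v; simp [dotProduct, sq]
  have hg : g = Bᵀ.mulVec y - M.mulVec dstar := by
    funext i
    have h := congrFun hkkt i
    simp only [Pi.sub_apply, Pi.neg_apply] at h
    simp only [Pi.sub_apply]
    linarith
  have hBt : ∀ v : Fin n → ℝ, B.mulVec v = 0 → Bᵀ.mulVec y ⬝ᵥ v = 0 := by
    intro v hv
    rw [Matrix.mulVec_transpose, ← Matrix.dotProduct_mulVec, hv,
      dotProduct_zero]
  have hMv : ∀ v : Fin n → ℝ, v ⬝ᵥ M.mulVec v = v ⬝ᵥ H.mulVec v + lam * (v ⬝ᵥ v) := by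
    intro v
    simp [hM, Matrix.add_mulVec, Matrix.smul_mulVec, Matrix.one_mulVec,
      dotProduct_add, dotProduct_smul, smul_eq_mul]
  have hgdot : ∀ v : Fin n → ℝ, B.mulVec v = 0 →
      g ⬝ᵥ v = - (dstar ⬝ᵥ M.mulVec v) := by
    intro v hv
    rw [hg, sub_dotProduct, hBt v hv, dotProduct_comm,
      Matrix.dotProduct_mulVec, ← Matrix.mulVec_transpose, hMsymm,
      dotProduct_comm]
    ring
  -- squared norms
  have hs0 : (0:ℝ) ≤ ∑ i, (dstar i) ^ 2 := Finset.sum_nonneg fun i _ => sq_nonneg _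
  have hsstar : lam * (∑ i, (dstar i) ^ 2) = lam * β ^ 2 := by
    rcases mul_eq_zero.mp hcomp with h | h
    · simp [h]
    · have hb : Real.sqrt (∑ i, (dstar i) ^ 2) = β := by linarith
      rw [← hb, Real.sq_sqrt hs0]
  -- first part
  have hpsdstar := hpsd dstar hfeas1
  have hgd : g ⬝ᵥ dstar = - (dstar ⬝ᵥ M.mulVec dstar) := hgdot dstar hfeas1
  have hMd := hMv dstar
  constructor
  · rw [hsum]
    linarith [hpsdstar, hgd, hMd]
  · intro d hBd hnorm
    have he : B.mulVec (d - dstar) = 0 := by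
      rw [Matrix.mulVec_sub, hBd, hfeas1, sub_zero]
    have hpe := hpsd (d - dstar) he
    have hexp : (d - dstar) ⬝ᵥ M.mulVec (d - dstar)
        = d ⬝ᵥ M.mulVec d - 2 * (dstar ⬝ᵥ M.mulVec d) + dstar ⬝ᵥ M.mulVec dstar := by
      rw [Matrix.mulVec_sub, sub_dotProduct, dotProduct_sub,
        dotProduct_sub, hsym d dstar]
      ring
    have hgd2 : g ⬝ᵥ d = - (dstar ⬝ᵥ M.mulVec d) := hgdot d hBd
    have hMdd := hMv d
    have hsd0 : (0:ℝ) ≤ ∑ i, (d i) ^ 2 := Finset.sum_nonneg fun i _ => sq_nonneg _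
    have hsd : (∑ i, (d i) ^ 2) ≤ β ^ 2 := by
      have h1 : Real.sqrt (∑ i, (d i) ^ 2) ^ 2 = ∑ i, (d i) ^ 2 := Real.sq_sqrt hsd0
      nlinarith [Real.sqrt_nonneg (∑ i, (d i) ^ 2)]
    have hld : lam * (∑ i, (d i) ^ 2) ≤ lam * β ^ 2 := by
      exact mul_le_mul_of_nonneg_left hsd hlam
    rw [hsum] at hsstar hld
    linarith [hpe, hexp, hgd, hgd2, hMd, hMdd, hsstar, hld]
end
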